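/- Half-space representation of the rotated unit hexagon: the regular hexagon with unit side length, center (x₀, y₀) and rotation angle θ equals the set of points p ∈ ℝ² satisfying, for each j ∈ {0,…,5}, (sin(θ + jπ/3), cos(θ + jπ/3)) · p ≤ (sin(θ + jπ/3), cos(θ + jπ/3)) · (x₀, y₀) + √3/2. -/

import Mathlib

noncomputable abbrev E2 := EuclideanSpace ℝ (Fin 2)
noncomputable def pt (a b : ℝ) : E2 := WithLp.toLp 2 ![a, b]
/-- Regular hexagon with center c, rotation angle θ and side length s. -/
noncomputable def hexagon (c : E2) (θ s : ℝ) : Set E2 :=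
  convexHull ℝ (Set.range fun j : Fin 6 =>
    c + s • pt (Real.sin (θ + ((j : ℝ) + 0.5) * (Real.pi / 3)))
               (Real.cos (θ + ((j : ℝ) + 0.5) * (Real.pi / 3))))

private lemma cv0 (a b c d e f : ℝ) : (![a,b,c,d,e,f] : Fin 6 → ℝ) 0 = a := rfl
private lemma cv1 (a b c d e f : ℝ) : (![a,b,c,d,e,f] : Fin 6 → ℝ) 1 = b := rfl
private lemma cv2 (a b c d e f : ℝ) : (![a,b,c,d,e,f] : Fin 6 → ℝ) 2 = c := rfl
private lemma cv3 (a b c d e f : ℝ) : (![a,b,c,d,e,f] : Fin 6 → ℝ) 3 = d := rfl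
private lemma cv4 (a b c d e f : ℝ) : (![a,b,c,d,e,f] : Fin 6 → ℝ) 4 = e := rfl
private lemma cv5 (a b c d e f : ℝ) : (![a,b,c,d,e,f] : Fin 6 → ℝ) 5 = f := rfl

open Real in
private lemma key_cos (n : ℤ) : Real.cos ((n : ℝ) * π / 3 - π / 6) ≤ Real.sqrt 3 / 2 := by
  set x := (n : ℝ) * π / 3 - π / 6 with hx
  have h3 : Real.cos (3 * x) = 0 := by
    have : 3 * x = (n : ℝ) * π - π / 2 := by rw [hx]; ring
    rw [this, Real.cos_sub_pi_div_two, Real.sin_int_mul_pi]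
  have h4 : 4 * Real.cos x ^ 3 - 3 * Real.cos x = 0 := by
    rw [← Real.cos_three_mul, h3]
  set t : ℝ := Real.sqrt 3 / 2 with htdef
  have ht2 : t ^ 2 = 3 / 4 := by
    rw [htdef]; rw [div_pow, Real.sq_sqrt (by norm_num : (0:ℝ) ≤ 3)]; norm_num
  have ht0 : 0 < t := by positivity
  have hc : Real.cos x * (Real.cos x - t) * (Real.cos x + t) = 0 := by
    linear_combination (1/4) * h4 - Real.cos x * ht2
  rcases le_or_gt (Real.cos x) t with h | h
  · exact h
  · exfalso
    have h1 : 0 < Real.cos x := lt_trans ht0 h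
    have h2 : 0 < Real.cos x - t := by linarith
    have h3' : 0 < Real.cos x + t := by linarith
    nlinarith [mul_pos (mul_pos h1 h2) h3']

open Real in
private lemma trig_vals :
    Real.sin (1/2*(π/3)) = 1/2 ∧ Real.cos (1/2*(π/3)) = Real.sqrt 3 / 2 ∧
    Real.sin (5/2*(π/3)) = 1/2 ∧ Real.cos (5/2*(π/3)) = -(Real.sqrt 3 / 2) ∧
    Real.sin (7/2*(π/3)) = -(1/2) ∧ Real.cos (7/2*(π/3)) = -(Real.sqrt 3 / 2) ∧
    Real.sin (9/2*(π/3)) = -1 ∧ Real.cos (9/2*(π/3)) = 0 ∧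
    Real.sin (11/2*(π/3)) = -(1/2) ∧ Real.cos (11/2*(π/3)) = Real.sqrt 3 / 2 := by
  have h1 : (1/2:ℝ)*(π/3) = π/6 := by ring
  have h5 : (5/2:ℝ)*(π/3) = π - π/6 := by ring
  have h7 : (7/2:ℝ)*(π/3) = π + π/6 := by ring
  have h9 : (9/2:ℝ)*(π/3) = π + π/2 := by ring
  have h11 : (11/2:ℝ)*(π/3) = -(π/6) + 2*π := by ring
  refine ⟨?_, ?_, ?_, ?_, ?_, ?_, ?_, ?_, ?_, ?_⟩
  · rw [h1, Real.sin_pi_div_six]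
  · rw [h1, Real.cos_pi_div_six]
  · rw [h5, Real.sin_pi_sub, Real.sin_pi_div_six]
  · rw [h5, Real.cos_pi_sub, Real.cos_pi_div_six]
  · rw [h7, Real.sin_add, Real.sin_pi, Real.cos_pi, Real.sin_pi_div_six]; ring
  · rw [h7, Real.cos_add, Real.sin_pi, Real.cos_pi, Real.cos_pi_div_six]; ring
  · rw [h9, Real.sin_add, Real.sin_pi, Real.cos_pi, Real.sin_pi_div_two]; ring
  · rw [h9, Real.cos_add, Real.sin_pi, Real.cos_pi, Real.cos_pi_div_two]; ring
  · rw [h11, Real.sin_add_two_pi, Real.sin_neg, Real.sin_pi_div_six]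
  · rw [h11, Real.cos_add_two_pi, Real.cos_neg, Real.cos_pi_div_six]

open Real in
private lemma trig_vals2 :
    Real.sin (2*(π/3)) = Real.sqrt 3 / 2 ∧ Real.cos (2*(π/3)) = -(1/2) ∧
    Real.sin (4*(π/3)) = -(Real.sqrt 3 / 2) ∧ Real.cos (4*(π/3)) = -(1/2) ∧
    Real.sin (5*(π/3)) = -(Real.sqrt 3 / 2) ∧ Real.cos (5*(π/3)) = 1/2 := by
  have h2 : (2:ℝ)*(π/3) = π - π/3 := by ring
  have h4 : (4:ℝ)*(π/3) = π + π/3 := by ring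
  have h5 : (5:ℝ)*(π/3) = -(π/3) + 2*π := by ring
  refine ⟨?_, ?_, ?_, ?_, ?_, ?_⟩
  · rw [h2, Real.sin_pi_sub, Real.sin_pi_div_three]
  · rw [h2, Real.cos_pi_sub, Real.cos_pi_div_three]
  · rw [h4, Real.sin_add, Real.sin_pi, Real.cos_pi, Real.sin_pi_div_three]; ring
  · rw [h4, Real.cos_add, Real.sin_pi, Real.cos_pi, Real.cos_pi_div_three]; ring
  · rw [h5, Real.sin_add_two_pi, Real.sin_neg, Real.sin_pi_div_three]
  · rw [h5, Real.cos_add_two_pi, Real.cos_neg, Real.cos_pi_div_three]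

open Real in
private lemma aux_mem (c : E2) (θ x y : ℝ) (p : E2)
    (hp0 : p 0 = c 0 + (Real.cos θ * x + Real.sin θ * y))
    (hp1 : p 1 = c 1 + (Real.cos θ * y - Real.sin θ * x))
    (l : Fin 6 → ℝ) (hn : ∀ j, 0 ≤ l j)
    (hsum : l 0 + l 1 + l 2 + l 3 + l 4 + l 5 = 1)
    (hx : l 0 * (1/2) + l 1 + l 2 * (1/2) - l 3 * (1/2) - l 4 - l 5 * (1/2) = x)
    (hy : (l 0 - l 2 - l 3 + l 5) * (Real.sqrt 3 / 2) = y) :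
    p ∈ hexagon c θ 1 := by
  set v : Fin 6 → E2 := fun j =>
    c + (1:ℝ) • pt (Real.sin (θ + ((j : ℝ) + 0.5) * (Real.pi / 3)))
               (Real.cos (θ + ((j : ℝ) + 0.5) * (Real.pi / 3))) with hv
  have hsum' : ∑ j, l j = 1 := by rw [Fin.sum_univ_six]; exact hsum
  have hmem : Finset.univ.centerMass l v ∈ hexagon c θ 1 := by
    apply Finset.centerMass_mem_convexHull
    · exact fun i _ => hn i
    · rw [hsum']; norm_num
    · exact fun i _ => Set.mem_range_self i
  have hpe : p = Finset.univ.centerMass l v := by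
    rw [Finset.centerMass_eq_of_sum_1 _ _ hsum']
    obtain ⟨t1, t2, t3, t4, t5, t6, t7, t8, t9, t10⟩ := trig_vals
    have e3 : ((3:Fin 6):ℝ) = 3 := by exact_mod_cast (rfl : ((3:Fin 6):ℕ) = 3)
    have e4 : ((4:Fin 6):ℝ) = 4 := by exact_mod_cast (rfl : ((4:Fin 6):ℕ) = 4)
    have e5 : ((5:Fin 6):ℝ) = 5 := by exact_mod_cast (rfl : ((5:Fin 6):ℕ) = 5)
    ext i
    fin_cases i
    · show p 0 = _
      simp only [hv, Fin.sum_univ_six, pt, Finset.sum_apply, WithLp.ofLp_sum, PiLp.toLp_apply, PiLp.add_apply, PiLp.smul_apply,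
        smul_eq_mul, Matrix.cons_val_zero, e3, e4, e5, Fin.zero_eta, Fin.mk_one]
      norm_num [Real.sin_add, Real.cos_add]
      simp only [t1, t2, t3, t4, t5, t6, t7, t8, t9, t10]
      rw [hp0]
      linear_combination (-1) * c 0 * hsum - Real.cos θ * hx - Real.sin θ * hy
    · show p 1 = _
      simp only [hv, Fin.sum_univ_six, pt, Finset.sum_apply, WithLp.ofLp_sum, PiLp.toLp_apply, PiLp.add_apply, PiLp.smul_apply,
        smul_eq_mul, Matrix.cons_val_one, Matrix.head_cons, e3, e4, e5, Fin.zero_eta, Fin.mk_one]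
      norm_num [Real.sin_add, Real.cos_add]
      simp only [t1, t2, t3, t4, t5, t6, t7, t8, t9, t10]
      rw [hp1]
      linear_combination (-1) * c 1 * hsum - Real.cos θ * hy + Real.sin θ * hx
  rw [hpe]; exact hmem

set_option maxHeartbeats 8000000 in
/-- Half-space representation of the rotated, translated unit regular hexagon. -/
theorem stmt_14 (c : E2) (θ : ℝ) :
    hexagon c θ 1 =
      {p : E2 | ∀ j : Fin 6,
        Real.sin (θ + (j : ℝ) * (Real.pi / 3)) * p 0 +
          Real.cos (θ + (j : ℝ) * (Real.pi / 3)) * p 1 ≤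
        Real.sin (θ + (j : ℝ) * (Real.pi / 3)) * c 0 +
          Real.cos (θ + (j : ℝ) * (Real.pi / 3)) * c 1 + Real.sqrt 3 / 2} := by
  have hs0 : (0:ℝ) < Real.sqrt 3 := by positivity
  have hs2 : Real.sqrt 3 ^ 2 = 3 := Real.sq_sqrt (by norm_num)
  apply Set.Subset.antisymm
  · -- hexagon ⊆ halfspaces
    apply convexHull_min
    · rintro q ⟨k, rfl⟩ j
      have hc0 : ((c + (1:ℝ) • pt (Real.sin (θ + ((k : ℝ) + 0.5) * (Real.pi / 3)))
               (Real.cos (θ + ((k : ℝ) + 0.5) * (Real.pi / 3)))) : E2) 0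
          = c 0 + Real.sin (θ + ((k : ℝ) + 0.5) * (Real.pi / 3)) := by
        simp [pt]
      have hc1 : ((c + (1:ℝ) • pt (Real.sin (θ + ((k : ℝ) + 0.5) * (Real.pi / 3)))
               (Real.cos (θ + ((k : ℝ) + 0.5) * (Real.pi / 3)))) : E2) 1
          = c 1 + Real.cos (θ + ((k : ℝ) + 0.5) * (Real.pi / 3)) := by
        simp [pt]
      simp only [Set.mem_setOf_eq, hc0, hc1]
      have hangle : (θ + (j : ℝ) * (Real.pi / 3)) - (θ + ((k : ℝ) + 0.5) * (Real.pi / 3))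
          = (((j:ℤ) - (k:ℤ) : ℤ) : ℝ) * Real.pi / 3 - Real.pi / 6 := by
        push_cast; ring
      have hkey := key_cos ((j:ℤ) - (k:ℤ))
      rw [← hangle, Real.cos_sub] at hkey
      nlinarith [hkey]
    · -- convexity
      intro a ha b hb α β hα hβ hαβ
      intro j
      have h1 := ha j
      have h2 := hb j
      have e0 : ((α • a + β • b : E2)) 0 = α * a 0 + β * b 0 := by
        simp [PiLp.add_apply, PiLp.smul_apply, smul_eq_mul]
      have e1 : ((α • a + β • b : E2)) 1 = α * a 1 + β * b 1 := by
        simp [PiLp.add_apply, PiLp.smul_apply, smul_eq_mul]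
      simp only [Set.mem_setOf_eq, e0, e1]
      have hc : α * (Real.sin (θ + (j:ℝ) * (Real.pi / 3)) * c 0 + Real.cos (θ + (j:ℝ) * (Real.pi / 3)) * c 1 + Real.sqrt 3 / 2)
          + β * (Real.sin (θ + (j:ℝ) * (Real.pi / 3)) * c 0 + Real.cos (θ + (j:ℝ) * (Real.pi / 3)) * c 1 + Real.sqrt 3 / 2)
          = Real.sin (θ + (j:ℝ) * (Real.pi / 3)) * c 0 + Real.cos (θ + (j:ℝ) * (Real.pi / 3)) * c 1 + Real.sqrt 3 / 2 := by
        linear_combination (Real.sin (θ + (j:ℝ) * (Real.pi / 3)) * c 0 + Real.cos (θ + (j:ℝ) * (Real.pi / 3)) * c 1 + Real.sqrt 3 / 2) * hαβ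
      nlinarith [mul_le_mul_of_nonneg_left h1 hα, mul_le_mul_of_nonneg_left h2 hβ, hc]
  · -- halfspaces ⊆ hexagon
    intro p hp
    simp only [Set.mem_setOf_eq] at hp
    obtain ⟨w2s, w2c, w4s, w4c, w5s, w5c⟩ := trig_vals2
    have e3 : ((3:Fin 6):ℝ) = 3 := by exact_mod_cast (rfl : ((3:Fin 6):ℕ) = 3)
    have e4 : ((4:Fin 6):ℝ) = 4 := by exact_mod_cast (rfl : ((4:Fin 6):ℕ) = 4)
    have e5 : ((5:Fin 6):ℝ) = 5 := by exact_mod_cast (rfl : ((5:Fin 6):ℕ) = 5)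
    have h0 := hp 0
    have h1 := hp 1
    have h2 := hp 2
    have h3 := hp 3
    have h4 := hp 4
    have h5 := hp 5
    have w3s : Real.sin (3*(Real.pi/3)) = 0 := by
      rw [show (3:ℝ)*(Real.pi/3) = Real.pi by ring, Real.sin_pi]
    have w3c : Real.cos (3*(Real.pi/3)) = -1 := by
      rw [show (3:ℝ)*(Real.pi/3) = Real.pi by ring, Real.cos_pi]
    norm_num [Real.sin_add, Real.cos_add, e3, e4, e5, Real.sin_pi, Real.cos_pi,
      w2s, w2c, w3s, w3c, w4s, w4c, w5s, w5c] at h0 h1 h2 h3 h4 h5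
    set x : ℝ := Real.cos θ * (p 0 - c 0) - Real.sin θ * (p 1 - c 1) with hxd
    set y : ℝ := Real.sin θ * (p 0 - c 0) + Real.cos θ * (p 1 - c 1) with hyd
    set z : ℝ := y * Real.sqrt 3 / 3 with hzd
    have hzs : z * Real.sqrt 3 = y := by
      rw [hzd]; field_simp; linear_combination y * hs2
    -- scaled constraints
    have F0 : 2 * y ≤ Real.sqrt 3 := by rw [hyd]; nlinarith [h0]
    have F1 : Real.sqrt 3 * x + y ≤ Real.sqrt 3 := by rw [hxd, hyd]; nlinarith [h1]
    have F2 : Real.sqrt 3 * x - y ≤ Real.sqrt 3 := by rw [hxd, hyd]; nlinarith [h2]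
    have F3 : -(Real.sqrt 3) ≤ 2 * y := by rw [hyd]; nlinarith [h3]
    have F4 : -(Real.sqrt 3 * x) - y ≤ Real.sqrt 3 := by rw [hxd, hyd]; nlinarith [h4]
    have F5 : -(Real.sqrt 3 * x) + y ≤ Real.sqrt 3 := by rw [hxd, hyd]; nlinarith [h5]
    -- z-form constraints
    have G0 : z ≤ 1/2 := by
      have := le_of_mul_le_mul_right (show z * Real.sqrt 3 ≤ (1/2) * Real.sqrt 3 by
        rw [hzs]; linarith) hs0
      exact this
    have G1 : x + z ≤ 1 := by
      have := le_of_mul_le_mul_right (show (x + z) * Real.sqrt 3 ≤ 1 * Real.sqrt 3 by nlinarith [hzs, F1]) hs0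
      exact this
    have G2 : x - z ≤ 1 := by
      have := le_of_mul_le_mul_right (show (x - z) * Real.sqrt 3 ≤ 1 * Real.sqrt 3 by nlinarith [hzs, F2]) hs0
      exact this
    have G3 : -(1/2) ≤ z := by
      have := le_of_mul_le_mul_right (show (-(1/2)) * Real.sqrt 3 ≤ z * Real.sqrt 3 by
        rw [hzs]; linarith) hs0
      exact this
    have G4 : -(x + z) ≤ 1 := by
      have := le_of_mul_le_mul_right (show (-(x + z)) * Real.sqrt 3 ≤ 1 * Real.sqrt 3 by nlinarith [hzs, F4]) hs0
      exact this
    have G5 : -(x - z) ≤ 1 := by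
      have := le_of_mul_le_mul_right (show (-(x - z)) * Real.sqrt 3 ≤ 1 * Real.sqrt 3 by nlinarith [hzs, F5]) hs0
      exact this
    -- p coordinates in terms of x, y
    have hp0 : p 0 = c 0 + (Real.cos θ * x + Real.sin θ * y) := by
      rw [hxd, hyd]
      linear_combination (-(p 0 - c 0)) * (Real.sin_sq_add_cos_sq θ)
    have hp1 : p 1 = c 1 + (Real.cos θ * y - Real.sin θ * x) := by
      rw [hxd, hyd]
      linear_combination (-(p 1 - c 1)) * (Real.sin_sq_add_cos_sq θ)
    have hyz : ∀ w : ℝ, w = 2 * z → w * (Real.sqrt 3 / 2) = y := by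
      intro w hw; rw [hw]; linarith [hzs]
    -- six sectors
    rcases le_total 0 z with hz0 | hz0
    · rcases le_total z x with hzx | hzx
      · -- sector 0
        refine aux_mem c θ x y p hp0 hp1
          ![2*z + (1 - x - z)/2, x - z, 0, (1 - x - z)/2, 0, 0] ?_ ?_ ?_ ?_
        · intro j; fin_cases j <;> simp [cv0, cv1, cv2, cv3, cv4, cv5] <;> linarith
        · simp only [cv0, cv1, cv2, cv3, cv4, cv5]; ring
        · simp only [cv0, cv1, cv2, cv3, cv4, cv5]; ring
        · simp only [cv0, cv1, cv2, cv3, cv4, cv5]; apply hyz; ring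
      · rcases le_total 0 (x + z) with hxz | hxz
        · -- sector 5
          refine aux_mem c θ x y p hp0 hp1
            ![x + z + (1 - 2*z)/2, 0, 0, (1 - 2*z)/2, 0, z - x] ?_ ?_ ?_ ?_
          · intro j; fin_cases j <;> simp [cv0, cv1, cv2, cv3, cv4, cv5] <;> linarith
          · simp only [cv0, cv1, cv2, cv3, cv4, cv5]; ring
          · simp only [cv0, cv1, cv2, cv3, cv4, cv5]; ring
          · simp only [cv0, cv1, cv2, cv3, cv4, cv5]; apply hyz; ring
        · -- sector 4
          refine aux_mem c θ x y p hp0 hp1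
            ![(1 + x - z)/2, 0, 0, (1 + x - z)/2, -(x + z), 2*z] ?_ ?_ ?_ ?_
          · intro j; fin_cases j <;> simp [cv0, cv1, cv2, cv3, cv4, cv5] <;> linarith
          · simp only [cv0, cv1, cv2, cv3, cv4, cv5]; ring
          · simp only [cv0, cv1, cv2, cv3, cv4, cv5]; ring
          · simp only [cv0, cv1, cv2, cv3, cv4, cv5]; apply hyz; ring
    · rcases le_total 0 (x + z) with hxz | hxz
      · -- sector 1
        refine aux_mem c θ x y p hp0 hp1
          ![(1 - x + z)/2, x + z, -(2*z), (1 - x + z)/2, 0, 0] ?_ ?_ ?_ ?_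
        · intro j; fin_cases j <;> simp [cv0, cv1, cv2, cv3, cv4, cv5] <;> linarith
        · simp only [cv0, cv1, cv2, cv3, cv4, cv5]; ring
        · simp only [cv0, cv1, cv2, cv3, cv4, cv5]; ring
        · simp only [cv0, cv1, cv2, cv3, cv4, cv5]; apply hyz; ring
      · rcases le_total z x with hzx | hzx
        · -- sector 2
          refine aux_mem c θ x y p hp0 hp1
            ![(1 + 2*z)/2, 0, x - z, -(x + z) + (1 + 2*z)/2, 0, 0] ?_ ?_ ?_ ?_
          · intro j; fin_cases j <;> simp [cv0, cv1, cv2, cv3, cv4, cv5] <;> linarith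
          · simp only [cv0, cv1, cv2, cv3, cv4, cv5]; ring
          · simp only [cv0, cv1, cv2, cv3, cv4, cv5]; ring
          · simp only [cv0, cv1, cv2, cv3, cv4, cv5]; apply hyz; ring
        · -- sector 3
          refine aux_mem c θ x y p hp0 hp1
            ![(1 + x + z)/2, 0, 0, -(2*z) + (1 + x + z)/2, z - x, 0] ?_ ?_ ?_ ?_
          · intro j; fin_cases j <;> simp [cv0, cv1, cv2, cv3, cv4, cv5] <;> linarith
          · simp only [cv0, cv1, cv2, cv3, cv4, cv5]; ring
          · simp only [cv0, cv1, cv2, cv3, cv4, cv5]; ring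
          · simp only [cv0, cv1, cv2, cv3, cv4, cv5]; apply hyz; ring
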